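/- For every positive integer k and every i ∈ {1,...,k}, the number 4·cos²(πi/(2k+1)) is a signless Laplacian eigenvalue of any graph G with multiplicity at least p_k(G) − q_k(G). -/

import Mathlib

open Matrix SimpleGraph Real

noncomputable def mult {m : Type*} [Fintype m] [DecidableEq m]
    (M : Matrix m m ℝ) (μ : ℝ) : ℕ :=
  Module.finrank ℝ (Module.End.eigenspace (Matrix.toLin' M) μ)

/-- A pendant path of length `k`, recorded as its sequence of vertices from the pendant
end `w 0` (degree one) through internal vertices of degree two to the attachment vertex
`w (Fin.last k)` of degree greater than two. -/
def IsPendantPath {n : ℕ} (G : SimpleGraph (Fin n)) [DecidableRel G.Adj] (k : ℕ)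
    (w : Fin (k + 1) → Fin n) : Prop :=
  Function.Injective w ∧
  (∀ i : Fin k, G.Adj (w i.castSucc) (w i.succ)) ∧
  G.degree (w 0) = 1 ∧
  (∀ i : Fin (k + 1), i ≠ 0 → i ≠ Fin.last k → G.degree (w i) = 2) ∧
  2 < G.degree (w (Fin.last k))

/-- `pk G k` is the number of pendant paths of length `k` in `G`. -/
noncomputable def pk {n : ℕ} (G : SimpleGraph (Fin n)) [DecidableRel G.Adj] (k : ℕ) : ℕ :=
  Nat.card {w : Fin (k + 1) → Fin n // IsPendantPath G k w}

/-- `qk G k` is the number of vertices of degree greater than two that are end vertices of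
some pendant path of length `k` in `G`. -/
noncomputable def qk {n : ℕ} (G : SimpleGraph (Fin n)) [DecidableRel G.Adj] (k : ℕ) : ℕ :=
  Nat.card {v : Fin n // 2 < G.degree v ∧
    ∃ w : Fin (k + 1) → Fin n, IsPendantPath G k w ∧ w (Fin.last k) = v}


namespace PendantAux

variable {n : ℕ} {G : SimpleGraph (Fin n)} [DecidableRel G.Adj] {k : ℕ}
  {w : Fin (k + 1) → Fin n}

def wN (k : ℕ) (w : Fin (k + 1) → Fin n) (m : ℕ) : Fin n :=
  w ⟨min m k, Nat.lt_succ_of_le (min_le_right m k)⟩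

lemma wN_eq (w : Fin (k + 1) → Fin n) {m : ℕ} (hm : m ≤ k) :
    wN k w m = w ⟨m, Nat.lt_succ_of_le hm⟩ :=
  congrArg w (Fin.ext (min_eq_left hm))

lemma wN_zero : wN k w 0 = w 0 := congrArg w (Fin.ext (by simp))

lemma wN_last : wN k w k = w (Fin.last k) := congrArg w (Fin.ext (by simp [Fin.last]))

lemma inj (hw : IsPendantPath G k w) {m l : ℕ} (hm : m ≤ k) (hl : l ≤ k)
    (h : wN k w m = wN k w l) : m = l := by
  rw [wN_eq w hm, wN_eq w hl] at h
  simpa using congrArg Fin.val (hw.1 h)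

lemma adj (hw : IsPendantPath G k w) {m : ℕ} (hmk : m < k) :
    G.Adj (wN k w m) (wN k w (m + 1)) := by
  rw [wN_eq w hmk.le, wN_eq w hmk]
  exact hw.2.1 ⟨m, hmk⟩

lemma deg0 (hw : IsPendantPath G k w) : G.degree (wN k w 0) = 1 := by
  rw [wN_eq w (Nat.zero_le k)]
  exact hw.2.2.1

lemma degmid (hw : IsPendantPath G k w) {m : ℕ} (h0 : 0 < m) (hmk : m < k) :
    G.degree (wN k w m) = 2 := by
  rw [wN_eq w hmk.le]
  exact hw.2.2.2.1 ⟨m, Nat.lt_succ_of_le hmk.le⟩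
    (by simp [Fin.ext_iff]; omega) (by simp [Fin.ext_iff, Fin.last]; omega)

lemma degk (hw : IsPendantPath G k w) : 2 < G.degree (wN k w k) := by
  rw [wN_eq w le_rfl]
  exact hw.2.2.2.2

lemma nbr (hw : IsPendantPath G k w) {m : ℕ} (hmk : m < k) {u : Fin n}
    (hadj : G.Adj (wN k w m) u) :
    u = wN k w (m + 1) ∨ (0 < m ∧ u = wN k w (m - 1)) := by
  rcases Nat.eq_zero_or_pos m with rfl | hm
  · left
    have h1 : G.Adj (wN k w 0) (wN k w 1) := adj hw hmk
    have hcard : (G.neighborFinset (wN k w 0)).card ≤ 1 :=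
      le_of_eq ((G.card_neighborFinset_eq_degree _).trans (deg0 hw))
    exact Finset.card_le_one.mp hcard u ((SimpleGraph.mem_neighborFinset _ _ _).2 hadj)
      _ ((SimpleGraph.mem_neighborFinset _ _ _).2 h1)
  · have h1 : G.Adj (wN k w m) (wN k w (m + 1)) := adj hw hmk
    have h2 : G.Adj (wN k w m) (wN k w (m - 1)) := by
      have := adj hw (show m - 1 < k by omega)
      rw [show m - 1 + 1 = m by omega] at this
      exact this.symm
    have hne : wN k w (m + 1) ≠ wN k w (m - 1) := fun h => by
      have := inj hw (by omega) (by omega) h; omega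
    have hcard : (G.neighborFinset (wN k w m)).card ≤ 2 :=
      le_of_eq ((G.card_neighborFinset_eq_degree _).trans (degmid hw hm hmk))
    have hsub : ({wN k w (m + 1), wN k w (m - 1)} : Finset (Fin n)) ⊆
        G.neighborFinset (wN k w m) := by
      intro z hz
      rcases Finset.mem_insert.mp hz with rfl | hz
      · exact (SimpleGraph.mem_neighborFinset _ _ _).2 h1
      · rw [Finset.mem_singleton] at hz
        subst hz
        exact (SimpleGraph.mem_neighborFinset _ _ _).2 h2
    have heq : G.neighborFinset (wN k w m) = {wN k w (m + 1), wN k w (m - 1)} := by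
      refine (Finset.eq_of_subset_of_card_le hsub ?_).symm
      rw [Finset.card_insert_of_notMem (by simpa using hne), Finset.card_singleton]
      exact hcard
    have hu : u ∈ ({wN k w (m + 1), wN k w (m - 1)} : Finset (Fin n)) := by
      rw [← heq]; exact (SimpleGraph.mem_neighborFinset _ _ _).2 hadj
    rcases Finset.mem_insert.mp hu with rfl | hu
    · exact Or.inl rfl
    · exact Or.inr ⟨hm, Finset.mem_singleton.mp hu⟩

lemma nbr' (hw : IsPendantPath G k w) {m : ℕ} (hmk : m < k) {v : Fin n}
    (hadj : G.Adj v (wN k w m)) :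
    v = wN k w (m + 1) ∨ v = wN k w (m - 1) :=
  (nbr hw hmk hadj.symm).imp id And.right

lemma uniq {w' : Fin (k + 1) → Fin n} (hw : IsPendantPath G k w)
    (hw' : IsPendantPath G k w') (h0 : w 0 = w' 0) (hk : 1 ≤ k) : w = w' := by
  have h0' : wN k w 0 = wN k w' 0 := by
    rw [wN_eq w (Nat.zero_le k), wN_eq w' (Nat.zero_le k)]
    have e : (⟨0, Nat.lt_succ_of_le (Nat.zero_le k)⟩ : Fin (k + 1)) = 0 := Fin.ext rfl
    rw [e]; exact h0
  have key : ∀ m, m ≤ k → wN k w m = wN k w' m := by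
    intro m
    induction m using Nat.strong_induction_on with
    | _ m ih =>
      match m with
      | 0 => intro _; exact h0'
      | 1 =>
        intro h1k
        have ha : G.Adj (wN k w 0) (wN k w' 1) := by
          rw [h0']; exact adj hw' (by omega)
        rcases nbr hw (by omega) ha with h | h
        · exact h.symm
        · omega
      | (m + 2) =>
        intro hm2
        have e1 := ih (m + 1) (by omega) (by omega)
        have e0 := ih m (by omega) (by omega)
        have ha : G.Adj (wN k w (m + 1)) (wN k w' (m + 2)) := by
          rw [e1]; exact adj hw' (by omega)
        rcases nbr hw (by omega) ha with h | ⟨_, h⟩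
        · exact h.symm
        · exfalso
          rw [show m + 1 - 1 = m from rfl] at h
          have := inj hw' (by omega) (by omega) (h.trans e0)
          omega
  funext j
  have hj : (j : ℕ) ≤ k := Nat.lt_succ_iff.mp j.isLt
  have := key j hj
  rwa [wN_eq w hj, wN_eq w' hj] at this



noncomputable def xv (k : ℕ) (w : Fin (k + 1) → Fin n) (a : ℕ → ℝ) : Fin n → ℝ :=
  fun v => ∑ m ∈ Finset.range k, if v = wN k w m then a m else 0

lemma xv_on (hw : IsPendantPath G k w) (a : ℕ → ℝ) {m : ℕ} (hm : m < k) :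
    xv k w a (wN k w m) = a m := by
  unfold xv
  rw [Finset.sum_eq_single_of_mem m (Finset.mem_range.2 hm)]
  · rw [if_pos rfl]
  · intro j hj hne
    rw [if_neg]
    intro h
    exact hne (inj hw hm.le (Finset.mem_range.1 hj).le h).symm

lemma xv_off (a : ℕ → ℝ) {v : Fin n} (hv : ∀ m, m < k → v ≠ wN k w m) :
    xv k w a v = 0 :=
  Finset.sum_eq_zero fun m hm => if_neg (hv m (Finset.mem_range.1 hm))

lemma adj_mulVec_xv (a : ℕ → ℝ) (v : Fin n) :
    (G.adjMatrix ℝ *ᵥ xv k w a) v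
      = ∑ m ∈ Finset.range k, if G.Adj v (wN k w m) then a m else 0 := by
  rw [SimpleGraph.adjMatrix_mulVec_apply]
  unfold xv
  rw [Finset.sum_comm]
  refine Finset.sum_congr rfl fun m _ => ?_
  rw [Finset.sum_ite_eq' (G.neighborFinset v) (wN k w m) (fun _ => a m)]
  simp [SimpleGraph.mem_neighborFinset]

lemma key (hw : IsPendantPath G k w) (hk1 : 1 ≤ k) (μ : ℝ) (a : ℕ → ℝ)
    (hak : a k = 0)
    (h0 : a 1 = (μ - 1) * a 0)
    (hrec : ∀ m, 1 ≤ m → a (m + 1) + a (m - 1) = (μ - 2) * a m) :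
    (G.degMatrix ℝ + G.adjMatrix ℝ) *ᵥ xv k w a
      = μ • xv k w a + a (k - 1) • (Pi.single (wN k w k) 1 : Fin n → ℝ) := by
  funext v
  rw [add_mulVec]
  simp only [Pi.add_apply, Pi.smul_apply, smul_eq_mul]
  rw [SimpleGraph.degMatrix_mulVec_apply, adj_mulVec_xv]
  by_cases hv : ∃ m, m ≤ k ∧ v = wN k w m
  · obtain ⟨m, hm, rfl⟩ := hv
    rcases eq_or_lt_of_le hm with heq | hmk
    · -- attachment vertex
      subst heq
      have hx : xv m w a (wN m w m) = 0 :=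
        xv_off a fun j hj h => by have := inj hw le_rfl hj.le h; omega
      have hsingle : (Pi.single (wN m w m) 1 : Fin n → ℝ) (wN m w m) = 1 := Pi.single_eq_same _ _
      have hS : (∑ j ∈ Finset.range m, if G.Adj (wN m w m) (wN m w j) then a j else 0)
          = a (m - 1) := by
        rw [Finset.sum_eq_single_of_mem (m - 1) (Finset.mem_range.2 (by omega))]
        · rw [if_pos]
          have := adj hw (show m - 1 < m by omega)
          rw [show m - 1 + 1 = m by omega] at this
          exact this.symm
        · intro j hj hne
          rw [if_neg]
          intro hadj
          rcases nbr' hw (Finset.mem_range.1 hj) hadj with h | h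
          · have := inj hw le_rfl (by have := Finset.mem_range.1 hj; omega) h
            omega
          · have hj' := Finset.mem_range.1 hj
            have := inj hw le_rfl (by omega) h
            omega
      rw [hx, hS, hsingle]
      ring
    · -- on-path, m < k
      have hx : xv k w a (wN k w m) = a m := xv_on hw a hmk
      have hsingle : (Pi.single (wN k w k) 1 : Fin n → ℝ) (wN k w m) = 0 :=
        Pi.single_eq_of_ne (fun h => by have := inj hw hmk.le le_rfl h; omega) _
      rcases Nat.eq_zero_or_pos m with rfl | hm0
      · -- pendant vertex
        have hdeg := deg0 hw
        have hS : (∑ j ∈ Finset.range k, if G.Adj (wN k w 0) (wN k w j) then a j else 0)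
            = a 1 := by
          have step : ∀ j ∈ Finset.range k,
              (if G.Adj (wN k w 0) (wN k w j) then a j else 0)
                = if j = 1 then a j else 0 := by
            intro j hj
            by_cases hadj : G.Adj (wN k w 0) (wN k w j)
            · rcases nbr hw hmk hadj with h | h
              · have hj' := Finset.mem_range.1 hj
                have : j = 1 := inj hw hj'.le (by omega) h
                rw [if_pos hadj, if_pos this]
              · omega
            · have hne1 : j ≠ 1 := fun hj1 => by
                subst hj1
                exact hadj (adj hw (by omega))
              rw [if_neg hadj, if_neg hne1]
          rw [Finset.sum_congr rfl step, Finset.sum_ite_eq' (Finset.range k) 1 a]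
          by_cases h1 : 1 < k
          · rw [if_pos (Finset.mem_range.2 h1)]
          · have hk1' : k = 1 := by omega
            rw [if_neg (by simp [Finset.mem_range]; omega), ← hak, hk1']
        rw [hx, hS, hdeg, hsingle, h0]
        push_cast
        ring
      · -- internal vertex
        have hdeg := degmid hw hm0 hmk
        have hS : (∑ j ∈ Finset.range k, if G.Adj (wN k w m) (wN k w j) then a j else 0)
            = a (m - 1) + a (m + 1) := by
          have step : ∀ j ∈ Finset.range k,
              (if G.Adj (wN k w m) (wN k w j) then a j else 0)
                = (if j = m - 1 then a j else 0) + (if j = m + 1 then a j else 0) := by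
            intro j hj
            have hj' := Finset.mem_range.1 hj
            by_cases hadj : G.Adj (wN k w m) (wN k w j)
            · rcases nbr hw hmk hadj with h | ⟨_, h⟩
              · have : j = m + 1 := inj hw hj'.le (by omega) h
                rw [if_pos hadj, this, if_neg (by omega), if_pos rfl]
                ring
              · have : j = m - 1 := inj hw hj'.le (by omega) h
                rw [if_pos hadj, this, if_pos rfl, if_neg (by omega)]
                ring
            · have hne1 : j ≠ m - 1 := fun hj1 => by
                subst hj1
                have h2 := adj hw (show m - 1 < k by omega)
                rw [show m - 1 + 1 = m by omega] at h2
                exact hadj h2.symm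
              have hne2 : j ≠ m + 1 := fun hj1 => by
                subst hj1
                exact hadj (adj hw hmk)
              rw [if_neg hadj, if_neg hne1, if_neg hne2]
              ring
          rw [Finset.sum_congr rfl step, Finset.sum_add_distrib,
            Finset.sum_ite_eq' (Finset.range k) (m - 1) a,
            Finset.sum_ite_eq' (Finset.range k) (m + 1) a,
            if_pos (Finset.mem_range.2 (by omega))]
          by_cases h1 : m + 1 < k
          · rw [if_pos (Finset.mem_range.2 h1)]
          · have : m + 1 = k := by omega
            rw [if_neg (by simp [Finset.mem_range]; omega), this, hak]
        rw [hx, hS, hdeg, hsingle]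
        have := hrec m hm0
        push_cast
        linarith
  · -- off-path vertex
    push_neg at hv
    have hx : xv k w a v = 0 := xv_off a fun m hm => hv m hm.le
    have hS : (∑ j ∈ Finset.range k, if G.Adj v (wN k w j) then a j else 0) = 0 := by
      refine Finset.sum_eq_zero fun j hj => if_neg fun hadj => ?_
      have hj' := Finset.mem_range.1 hj
      rcases nbr' hw hj' hadj with h | h
      · exact hv (j + 1) (by omega) h
      · exact hv (j - 1) (by omega) h
    have hsingle : (Pi.single (wN k w k) 1 : Fin n → ℝ) v = 0 :=
      Pi.single_eq_of_ne (fun h => hv k le_rfl h) _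
    rw [hx, hS, hsingle]
    ring

end PendantAux


theorem stmt9 {n : ℕ} (G : SimpleGraph (Fin n)) [DecidableRel G.Adj]
    (k i : ℕ) (hk : 1 ≤ k) (hi1 : 1 ≤ i) (hik : i ≤ k) :
    pk G k - qk G k ≤
      mult (G.degMatrix ℝ + G.adjMatrix ℝ) (4 * Real.cos (Real.pi * i / (2 * k + 1)) ^ 2) := by
  classical
  set θ : ℝ := Real.pi * i / (2 * k + 1) with hθdef
  set μ : ℝ := 4 * Real.cos θ ^ 2 with hμdef
  have hK : (2 * (k : ℝ) + 1) ≠ 0 := by positivity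
  set a : ℕ → ℝ := fun m => Real.sin ((2 * (m : ℝ) + 1) * θ) with hadef
  have ha : ∀ m : ℕ, a m = Real.sin ((2 * (m : ℝ) + 1) * θ) := fun m => rfl
  -- trigonometric facts
  have hak : a k = 0 := by
    rw [ha, hθdef, show (2 * (k : ℝ) + 1) * (Real.pi * i / (2 * k + 1)) = i * Real.pi by
      field_simp]
    exact Real.sin_nat_mul_pi i
  have hne : ∀ j : ℕ, ¬ ((2 * (k : ℤ) + 1) ∣ ((j : ℤ) * i)) →
      Real.sin ((j : ℝ) * θ) ≠ 0 := by
    intro j hnd h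
    rw [Real.sin_eq_zero_iff] at h
    obtain ⟨z, hz⟩ := h
    apply hnd
    have h2 : ((z : ℝ) * (2 * k + 1)) * Real.pi = ((j : ℝ) * i) * Real.pi := by
      rw [hθdef] at hz
      field_simp at hz
      linear_combination Real.pi * hz
    have h3 : (z : ℝ) * (2 * k + 1) = (j : ℝ) * i := mul_right_cancel₀ Real.pi_ne_zero h2
    have h4 : z * (2 * (k : ℤ) + 1) = (j : ℤ) * i := by exact_mod_cast h3
    exact ⟨z, by rw [← h4]; ring⟩
  have ha0 : a 0 ≠ 0 := by
    have hnd : ¬ ((2 * (k : ℤ) + 1) ∣ (((1 : ℕ) : ℤ) * i)) := by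
      intro hd
      have := Int.le_of_dvd (by omega) hd
      omega
    have := hne 1 hnd
    rw [ha]
    have e : (2 * ((0 : ℕ) : ℝ) + 1) * θ = ((1 : ℕ) : ℝ) * θ := by push_cast; ring
    rw [e]; exact this
  have hck : a (k - 1) ≠ 0 := by
    have hnd : ¬ ((2 * (k : ℤ) + 1) ∣ (((2 * k - 1 : ℕ) : ℤ) * i)) := by
      intro hd
      have h6 : (2 * (k : ℤ) + 1) ∣ (2 * (k : ℤ) + 1) * i := dvd_mul_right _ _
      have h8 : (2 * (k : ℤ) + 1) * i - ((2 * k - 1 : ℕ) : ℤ) * i = 2 * i := by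
        have hcast : ((2 * k - 1 : ℕ) : ℤ) = 2 * (k : ℤ) - 1 := by omega
        rw [hcast]; ring
      have h7 : (2 * (k : ℤ) + 1) ∣ 2 * (i : ℤ) := h8 ▸ dvd_sub h6 hd
      have := Int.le_of_dvd (by omega) h7
      omega
    have := hne (2 * k - 1) hnd
    rw [ha]
    have e : (2 * ((k - 1 : ℕ) : ℝ) + 1) * θ = ((2 * k - 1 : ℕ) : ℝ) * θ := by
      have h1 : ((k - 1 : ℕ) : ℝ) = (k : ℝ) - 1 := by
        rw [Nat.cast_sub hk]; norm_num
      have h2 : ((2 * k - 1 : ℕ) : ℝ) = 2 * (k : ℝ) - 1 := by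
        rw [Nat.cast_sub (by omega)]; push_cast; ring
      rw [h1, h2]; ring
    rw [e]; exact this
  have h0 : a 1 = (μ - 1) * a 0 := by
    rw [ha, ha, hμdef, Real.cos_sq',
      show (2 * ((1 : ℕ) : ℝ) + 1) * θ = 3 * θ by push_cast; ring,
      Real.sin_three_mul,
      show (2 * ((0 : ℕ) : ℝ) + 1) * θ = θ by push_cast; ring]
    ring
  have hrec : ∀ m, 1 ≤ m → a (m + 1) + a (m - 1) = (μ - 2) * a m := by
    intro m hm
    rw [ha, ha, ha]
    have hc : ((m - 1 : ℕ) : ℝ) = (m : ℝ) - 1 := by rw [Nat.cast_sub hm]; norm_num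
    rw [hc]
    push_cast
    rw [show (2 * ((m : ℝ) + 1) + 1) * θ = (2 * m + 1) * θ + 2 * θ by ring,
      show (2 * ((m : ℝ) - 1) + 1) * θ = (2 * m + 1) * θ - 2 * θ by ring,
      Real.sin_add, Real.sin_sub, Real.cos_two_mul, hμdef]
    ring
  -- linear algebra setup
  set M : Matrix (Fin n) (Fin n) ℝ := G.degMatrix ℝ + G.adjMatrix ℝ with hM
  set E := Module.End.eigenspace (Matrix.toLin' M) μ with hE
  have hmult : mult M μ = Module.finrank ℝ E := rfl
  haveI : Fintype {w : Fin (k + 1) → Fin n // IsPendantPath G k w} := Fintype.ofFinite _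
  set AT := {v : Fin n // 2 < G.degree v ∧
      ∃ w : Fin (k + 1) → Fin n, IsPendantPath G k w ∧ w (Fin.last k) = v} with hATdef
  haveI : Fintype AT := Fintype.ofFinite _
  have hpk : pk G k = Fintype.card {w : Fin (k + 1) → Fin n // IsPendantPath G k w} :=
    Nat.card_eq_fintype_card
  have hqk : qk G k = Fintype.card AT := Nat.card_eq_fintype_card
  set x : {w : Fin (k + 1) → Fin n // IsPendantPath G k w} → (Fin n → ℝ) :=
    fun w => PendantAux.xv k w.1 a with hxdef
  have hkey : ∀ w : {w : Fin (k + 1) → Fin n // IsPendantPath G k w},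
      M *ᵥ x w = μ • x w + a (k - 1) • (Pi.single (PendantAux.wN k w.1 k) 1 : Fin n → ℝ) :=
    fun w => PendantAux.key w.2 hk μ a hak h0 hrec
  -- linear independence
  have hli : LinearIndependent ℝ x := by
    rw [Fintype.linearIndependent_iff]
    intro g hg w0
    have h := congrFun hg (PendantAux.wN k w0.1 0)
    rw [Finset.sum_apply] at h
    simp only [Pi.smul_apply, smul_eq_mul, Pi.zero_apply] at h
    have hterm : ∀ wp : {w : Fin (k + 1) → Fin n // IsPendantPath G k w},
        x wp (PendantAux.wN k w0.1 0) = if wp = w0 then a 0 else 0 := by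
      intro wp
      by_cases hww : wp = w0
      · subst hww; rw [if_pos rfl]; exact PendantAux.xv_on wp.2 a hk
      · rw [if_neg hww]
        refine PendantAux.xv_off a fun m hm hcon => ?_
        rcases Nat.eq_zero_or_pos m with rfl | hmpos
        · apply hww
          apply Subtype.ext
          refine PendantAux.uniq wp.2 w0.2 ?_ hk
          have hcon' := hcon.symm
          rw [PendantAux.wN_zero, PendantAux.wN_zero] at hcon'
          exact hcon'
        · have h1 : G.degree (PendantAux.wN k w0.1 0) = 1 := PendantAux.deg0 w0.2
          have h2 : G.degree (PendantAux.wN k wp.1 m) = 2 := PendantAux.degmid wp.2 hmpos hm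
          rw [hcon] at h1
          exact absurd (h1.symm.trans h2) (by decide)
    rw [Finset.sum_congr rfl (fun wp _ => by rw [hterm wp, mul_ite, mul_zero]),
      Finset.sum_ite_eq' Finset.univ w0 (fun wp => g wp * a 0),
      if_pos (Finset.mem_univ _)] at h
    exact (mul_eq_zero.mp h).resolve_right ha0
  -- submodules
  set W := Submodule.span ℝ (Set.range x) with hWdef
  have hW : Module.finrank ℝ W
      = Fintype.card {w : Fin (k + 1) → Fin n // IsPendantPath G k w} :=
    finrank_span_eq_card hli
  set L : (Fin n → ℝ) →ₗ[ℝ] (Fin n → ℝ) := Matrix.toLin' M - μ • LinearMap.id with hLdef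
  set gmap : W →ₗ[ℝ] (Fin n → ℝ) := L.comp W.subtype with hgdef
  have hrn : Module.finrank ℝ (LinearMap.range gmap) + Module.finrank ℝ (LinearMap.ker gmap)
      = Module.finrank ℝ W := LinearMap.finrank_range_add_finrank_ker gmap
  set sfun : AT → (Fin n → ℝ) := fun v => (Pi.single v.1 1 : Fin n → ℝ) with hsdef
  set U := Submodule.span ℝ (Set.range sfun) with hUdef
  have hLx : ∀ wp : {w : Fin (k + 1) → Fin n // IsPendantPath G k w},
      L (x wp) = a (k - 1) • (Pi.single (PendantAux.wN k wp.1 k) 1 : Fin n → ℝ) := by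
    intro wp
    have h1 : L (x wp) = M *ᵥ x wp - μ • x wp := by
      rw [hLdef]
      simp [Matrix.toLin'_apply]
    rw [h1, hkey wp, add_sub_cancel_left]
  have hrange : LinearMap.range gmap ≤ U := by
    rw [hgdef, LinearMap.range_comp, Submodule.range_subtype, hWdef, Submodule.map_span]
    apply Submodule.span_le.2
    rintro z ⟨y, ⟨wp, rfl⟩, rfl⟩
    rw [hLx wp]
    refine Submodule.smul_mem _ _ (Submodule.subset_span ?_)
    refine ⟨⟨PendantAux.wN k wp.1 k, ?_, wp.1, wp.2, (PendantAux.wN_last).symm⟩, rfl⟩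
    exact PendantAux.degk wp.2
  have hU : Module.finrank ℝ U ≤ Fintype.card AT := by
    refine le_trans (finrank_span_le_card (Set.range sfun)) ?_
    rw [Set.toFinset_range]
    exact le_trans Finset.card_image_le (le_of_eq Finset.card_univ)
  have hrange' : Module.finrank ℝ (LinearMap.range gmap) ≤ Fintype.card AT :=
    le_trans (Submodule.finrank_mono hrange) hU
  have hker : Module.finrank ℝ (LinearMap.ker gmap) ≤ Module.finrank ℝ E := by
    have hle : (LinearMap.ker gmap).map W.subtype ≤ E := by
      rintro z ⟨⟨y, hyW⟩, hy0, rfl⟩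
      rw [hE]
      rw [Module.End.mem_eigenspace_iff]
      have h1 : L y = 0 := hy0
      rw [hLdef] at h1
      have h2 : Matrix.toLin' M y - μ • y = 0 := by simpa using h1
      have h3 := sub_eq_zero.mp h2
      exact h3
    calc Module.finrank ℝ (LinearMap.ker gmap)
        = Module.finrank ℝ ((LinearMap.ker gmap).map W.subtype) :=
          (Submodule.finrank_map_subtype_eq W _).symm
      _ ≤ Module.finrank ℝ E := Submodule.finrank_mono hle
  rw [hpk, hqk, hmult]
  refine Nat.sub_le_iff_le_add.mpr ?_
  calc Fintype.card {w : Fin (k + 1) → Fin n // IsPendantPath G k w}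
      = Module.finrank ℝ W := hW.symm
    _ = Module.finrank ℝ (LinearMap.range gmap) + Module.finrank ℝ (LinearMap.ker gmap) :=
        hrn.symm
    _ ≤ Fintype.card AT + Module.finrank ℝ ↥E := Nat.add_le_add hrange' hker
    _ = Module.finrank ℝ ↥E + Fintype.card AT := Nat.add_comm _ _
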